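/- If random variables Z_n satisfy that the conditional distribution of Z_n given W_0 converges in probability to a distribution function G, and Z_n' - Z_n → 0 in probability, then the conditional distribution of Z_n' given W_0 also converges in probability to G (a conditional Slutsky theorem). -/

import Mathlib

open MeasureTheory Filter Topology

private lemma indicator_le_union {Ω : Type*} {A B C : Set Ω} (h : A ⊆ B ∪ C) :
    A.indicator (fun _ => (1 : ℝ)) ≤
      B.indicator (fun _ => (1 : ℝ)) + C.indicator (fun _ => (1 : ℝ)) := by
  classical
  intro ω
  simp only [Set.indicator_apply, Pi.add_apply]
  by_cases hA : ω ∈ A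
  · rcases h hA with hB | hC
    · by_cases hC : ω ∈ C <;> simp [hA, hB, hC] <;> norm_num
    · by_cases hB : ω ∈ B <;> simp [hA, hB, hC] <;> norm_num
  · by_cases hB : ω ∈ B <;> by_cases hC : ω ∈ C <;> simp [hA, hB, hC] <;> norm_num

/-- conditional Slutsky: if the conditional distribution of `Z n`
given `W₀` converges in probability to a distribution function `G` (meaning
`P[Z n ≤ t | W₀] → G t` in probability for every continuity point `t` of `G`),
and `Z' n - Z n → 0` in probability, then the conditional distribution of `Z' n`
given `W₀` also converges in probability to `G`. -/
theorem conditional_slutsky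
    {Ω 𝓦 : Type*} [MeasurableSpace Ω] [MeasurableSpace 𝓦]
    (P : Measure Ω) [IsProbabilityMeasure P]
    (W0 : Ω → 𝓦) (hW0 : Measurable W0)
    (Z Z' : ℕ → Ω → ℝ) (hZ : ∀ n, Measurable (Z n)) (hZ' : ∀ n, Measurable (Z' n))
    (G : ℝ → ℝ) (hG : Monotone G)
    (hconv : ∀ t : ℝ, ContinuousAt G t →
      TendstoInMeasure P
        (fun n => P[Set.indicator {ω | Z n ω ≤ t} (fun _ => (1 : ℝ)) |
          MeasurableSpace.comap W0 inferInstance])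
        atTop (fun _ => G t))
    (hdiff : TendstoInMeasure P (fun n ω => Z' n ω - Z n ω) atTop (fun _ => (0 : ℝ))) :
    ∀ t : ℝ, ContinuousAt G t →
      TendstoInMeasure P
        (fun n => P[Set.indicator {ω | Z' n ω ≤ t} (fun _ => (1 : ℝ)) |
          MeasurableSpace.comap W0 inferInstance])
        atTop (fun _ => G t) := by
  intro t ht
  have hm : MeasurableSpace.comap W0 inferInstance ≤ (inferInstance : MeasurableSpace Ω) :=
    hW0.comap_le
  rw [tendstoInMeasure_iff_dist]
  intro ε hε
  have hε4 : (0 : ℝ) < ε / 4 := by linarith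
  -- choose δ from continuity of G at t
  obtain ⟨δ, hδpos, hδ⟩ := Metric.continuousAt_iff.mp ht (ε / 4) hε4
  -- dense set of continuity points
  have hdense : Dense {x : ℝ | ¬ContinuousAt G x}ᶜ :=
    (hG.countable_not_continuousAt).dense_compl ℝ
  obtain ⟨u, humem, huo⟩ := hdense.exists_between (show t < t + δ by linarith)
  obtain ⟨s, hsmem, hso⟩ := hdense.exists_between (show t - δ < t by linarith)
  have hu : ContinuousAt G u := not_not.mp humem
  have hs : ContinuousAt G s := not_not.mp hsmem
  have htu : t < u := huo.1
  have htu' : u < t + δ := huo.2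
  have hst : s < t := hso.2
  have hst' : t - δ < s := hso.1
  have hGu : |G u - G t| < ε / 4 := by
    have := hδ (x := u) (by rw [Real.dist_eq, abs_lt]; constructor <;> linarith)
    rwa [Real.dist_eq] at this
  have hGs : |G s - G t| < ε / 4 := by
    have := hδ (x := s) (by rw [Real.dist_eq, abs_lt]; constructor <;> linarith)
    rwa [Real.dist_eq] at this
  set c : ℝ := min (u - t) (t - s) with hc_def
  have hc : 0 < c := lt_min (by linarith) (by linarith)
  -- the sets
  set D : ℕ → Set Ω := fun n => {ω | c ≤ |Z' n ω - Z n ω|} with hD_def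
  have hDm : ∀ n, MeasurableSet (D n) :=
    fun n => measurableSet_le measurable_const ((hZ' n).sub (hZ n)).abs
  have hAm : ∀ n, MeasurableSet {ω | Z' n ω ≤ t} :=
    fun n => measurableSet_le (hZ' n) measurable_const
  have hBum : ∀ n, MeasurableSet {ω | Z n ω ≤ u} :=
    fun n => measurableSet_le (hZ n) measurable_const
  have hBsm : ∀ n, MeasurableSet {ω | Z n ω ≤ s} :=
    fun n => measurableSet_le (hZ n) measurable_const
  have hint : ∀ (S : Set Ω), MeasurableSet S →
      Integrable (S.indicator fun _ => (1 : ℝ)) P :=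
    fun S hS => (integrable_const (1 : ℝ)).indicator hS
  -- general comparison of conditional expectations of indicators
  have key : ∀ {A B C : Set Ω}, MeasurableSet A → MeasurableSet B → MeasurableSet C →
      A ⊆ B ∪ C →
      P[A.indicator (fun _ => (1 : ℝ)) | MeasurableSpace.comap W0 inferInstance] ≤ᵐ[P]
        P[B.indicator (fun _ => (1 : ℝ)) | MeasurableSpace.comap W0 inferInstance] + P[C.indicator (fun _ => (1 : ℝ)) | MeasurableSpace.comap W0 inferInstance] := by
    intro A B C hA hB hC hsub
    have h1 := condExp_mono (m := MeasurableSpace.comap W0 inferInstance) (μ := P) (hint A hA) ((hint B hB).add (hint C hC))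
      (Filter.Eventually.of_forall (indicator_le_union hsub))
    exact h1.trans (condExp_add (hint B hB) (hint C hC) _).le
  set g : ℕ → Ω → ℝ :=
    fun n => P[Set.indicator {ω | Z' n ω ≤ t} (fun _ => (1 : ℝ)) | MeasurableSpace.comap W0 inferInstance] with hg_def
  set fu : ℕ → Ω → ℝ :=
    fun n => P[Set.indicator {ω | Z n ω ≤ u} (fun _ => (1 : ℝ)) | MeasurableSpace.comap W0 inferInstance] with hfu_def
  set fs : ℕ → Ω → ℝ :=
    fun n => P[Set.indicator {ω | Z n ω ≤ s} (fun _ => (1 : ℝ)) | MeasurableSpace.comap W0 inferInstance] with hfs_def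
  set h : ℕ → Ω → ℝ :=
    fun n => P[(D n).indicator (fun _ => (1 : ℝ)) | MeasurableSpace.comap W0 inferInstance] with hh_def
  -- pointwise set inclusions
  have hsub1 : ∀ n, {ω | Z' n ω ≤ t} ⊆ {ω | Z n ω ≤ u} ∪ D n := by
    intro n ω hω
    simp only [Set.mem_setOf_eq] at hω
    by_cases hB : Z n ω ≤ u
    · exact Or.inl hB
    · push_neg at hB
      refine Or.inr ?_
      show c ≤ |Z' n ω - Z n ω|
      rw [abs_sub_comm]
      refine le_trans ?_ (le_abs_self _)
      have : c ≤ u - t := min_le_left _ _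
      linarith
  have hsub2 : ∀ n, {ω | Z n ω ≤ s} ⊆ {ω | Z' n ω ≤ t} ∪ D n := by
    intro n ω hω
    simp only [Set.mem_setOf_eq] at hω
    by_cases hB : Z' n ω ≤ t
    · exact Or.inl hB
    · push_neg at hB
      refine Or.inr ?_
      show c ≤ |Z' n ω - Z n ω|
      refine le_trans ?_ (le_abs_self _)
      have : c ≤ t - s := min_le_right _ _
      linarith
  have E1 : ∀ n, g n ≤ᵐ[P] fu n + h n :=
    fun n => key (hAm n) (hBum n) (hDm n) (hsub1 n)
  have E2 : ∀ n, fs n ≤ᵐ[P] g n + h n :=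
    fun n => key (hBsm n) (hAm n) (hDm n) (hsub2 n)
  have hpos : ∀ n, (0 : Ω → ℝ) ≤ᵐ[P] h n :=
    fun n => condExp_nonneg (Filter.Eventually.of_forall fun ω =>
      Set.indicator_nonneg (fun _ _ => zero_le_one) ω)
  -- L¹ convergence of h to 0
  have hPD : Tendsto (fun n => P (D n)) atTop (𝓝 0) := by
    have := tendstoInMeasure_iff_dist.mp hdiff c hc
    simpa [hD_def, Real.dist_eq] using this
  have heq : ∀ n, eLpNorm (h n) 1 P = P (D n) := by
    intro n
    rw [eLpNorm_one_eq_lintegral_enorm]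
    have h1 : ∫⁻ ω, ‖h n ω‖ₑ ∂P = ∫⁻ ω, ENNReal.ofReal (h n ω) ∂P := by
      refine lintegral_congr_ae ?_
      filter_upwards [hpos n] with ω hω
      rw [Real.enorm_eq_ofReal hω]
    rw [h1, ← ofReal_integral_eq_lintegral_ofReal integrable_condExp (hpos n)]
    have h2 : ∫ ω, h n ω ∂P = ∫ ω, (D n).indicator (1 : Ω → ℝ) ω ∂P :=
      integral_condExp hm
    rw [h2, integral_indicator_one (hDm n), Measure.real, ENNReal.ofReal_toReal (measure_ne_top P _)]
  have heLp : Tendsto (fun n => eLpNorm (h n - 0) 1 P) atTop (𝓝 0) := by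
    simp only [sub_zero, heq]
    exact hPD
  have hTIM : TendstoInMeasure P h atTop (fun _ => (0 : ℝ)) :=
    tendstoInMeasure_of_tendsto_eLpNorm one_ne_zero
      (fun n => (stronglyMeasurable_condExp.mono hm).aestronglyMeasurable)
      aestronglyMeasurable_const heLp
  have hh3 : Tendsto (fun n => P {ω | ε / 4 ≤ h n ω}) atTop (𝓝 0) := by
    refine tendsto_of_tendsto_of_tendsto_of_le_of_le tendsto_const_nhds
      (tendstoInMeasure_iff_dist.mp hTIM (ε / 4) hε4) (fun n => zero_le) (fun n => measure_mono ?_)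
    intro ω hω
    simp only [Set.mem_setOf_eq] at hω ⊢
    rw [Real.dist_eq, sub_zero]
    exact hω.trans (le_abs_self _)
  have hU := tendstoInMeasure_iff_dist.mp (hconv u hu) (ε / 4) hε4
  have hS := tendstoInMeasure_iff_dist.mp (hconv s hs) (ε / 4) hε4
  have hsum : Tendsto (fun n => P {ω | ε / 4 ≤ dist (fu n ω) (G u)}
      + P {ω | ε / 4 ≤ dist (fs n ω) (G s)} + P {ω | ε / 4 ≤ h n ω}) atTop (𝓝 0) := by
    simpa using (hU.add hS).add hh3
  refine tendsto_of_tendsto_of_tendsto_of_le_of_le tendsto_const_nhds hsum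
    (fun n => zero_le) (fun n => ?_)
  have hae : ({ω | ε ≤ dist (g n ω) (G t)} : Set Ω) ≤ᵐ[P]
      ((({ω | ε / 4 ≤ dist (fu n ω) (G u)} : Set Ω) ∪ {ω | ε / 4 ≤ dist (fs n ω) (G s)})
        ∪ {ω | ε / 4 ≤ h n ω} : Set Ω) := by
    filter_upwards [E1 n, E2 n, hpos n] with ω h1 h2 h3
    intro hω
    have hω' : ε ≤ dist (g n ω) (G t) := hω
    show ω ∈ ((({ω | ε / 4 ≤ dist (fu n ω) (G u)} : Set Ω)
      ∪ {ω | ε / 4 ≤ dist (fs n ω) (G s)}) ∪ {ω | ε / 4 ≤ h n ω} : Set Ω)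
    simp only [Set.mem_union, Set.mem_setOf_eq]
    by_contra hcon
    push_neg at hcon
    obtain ⟨⟨c1, c2⟩, c3⟩ := hcon
    simp only [Pi.add_apply] at h1 h2
    rw [Real.dist_eq] at hω' c1 c2
    have hb1 := abs_lt.mp c1
    have hb2 := abs_lt.mp c2
    have hgu := abs_lt.mp hGu
    have hgs := abs_lt.mp hGs
    have hP3 : (0 : ℝ) ≤ h n ω := h3
    have : |g n ω - G t| < ε := by
      rw [abs_lt]
      constructor <;> linarith
    linarith [hω']
  calc P {ω | ε ≤ dist (g n ω) (G t)}
      ≤ P (({ω | ε / 4 ≤ dist (fu n ω) (G u)} ∪ {ω | ε / 4 ≤ dist (fs n ω) (G s)})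
        ∪ {ω | ε / 4 ≤ h n ω}) := measure_mono_ae hae
    _ ≤ P ({ω | ε / 4 ≤ dist (fu n ω) (G u)} ∪ {ω | ε / 4 ≤ dist (fs n ω) (G s)})
        + P {ω | ε / 4 ≤ h n ω} := measure_union_le _ _
    _ ≤ P {ω | ε / 4 ≤ dist (fu n ω) (G u)} + P {ω | ε / 4 ≤ dist (fs n ω) (G s)}
        + P {ω | ε / 4 ≤ h n ω} := add_le_add_left (measure_union_le _ _) _
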